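/- Let k ≥ 2 be an integer and let f : (0,∞) → (0,∞) be a monotone non-increasing function such that limsup_{x→∞} f(x)^{1/x} < 1/(2k-1)^k. Then there exists a neighborhood U of the point ℒ* = (1/k, …, 1/k) in the open simplex Δ_k such that for every ℒ ∈ U one has P_f(ℒ) ≤ C_f(ℒ) < ∞. -/

import Mathlib

open Filter Topology
open scoped ENNReal

namespace McShane

/-- The ℒ-weighted length of the freely reduced form of `g`: the sum of `L i`
over all occurrences of `aᵢ^{±1}` in the reduced word of `g`. -/
noncomputable def wlen {k : ℕ} (L : Fin k → ℝ) (g : FreeGroup (Fin k)) : ℝ :=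
  ((FreeGroup.toWord g).map fun x => L x.1).sum

/-- The hyperbolic length of a conjugacy class: the infimum of the ℒ-weighted
lengths of its representatives. For positive edge lengths this equals
`∑ mᵢ·L i` where `mᵢ` counts occurrences of `aᵢ^{±1}` in the cyclically reduced form. -/
noncomputable def hlen {k : ℕ} (L : Fin k → ℝ) (c : ConjClasses (FreeGroup (Fin k))) : ℝ :=
  sInf (wlen L '' c.carrier)

/-- The open simplex `Δ_k` of volume-one metric structures on the wedge of `k` circles. -/
def simplex (k : ℕ) : Set (Fin k → ℝ) :=
  {L | (∀ i, 0 < L i) ∧ ∑ i, L i = 1}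

/-- The barycentric point `ℒ* = (1/k, …, 1/k)`. -/
noncomputable def Lstar (k : ℕ) : Fin k → ℝ := fun _ => 1 / k

/-- `g` is primitive iff it belongs to some free basis of the free group,
equivalently it is the image of a basis element under an automorphism. -/
def IsPrimitive {k : ℕ} (g : FreeGroup (Fin k)) : Prop :=
  ∃ (e : FreeGroup (Fin k) ≃* FreeGroup (Fin k)) (i : Fin k), e (FreeGroup.of i) = g

/-- `C_f(ℒ) = ∑_{w ∈ 𝒞_k} f(ℓ_ℒ(w))`, the sum over all nontrivial conjugacy classes. -/
noncomputable def Cf {k : ℕ} (f : ℝ → ℝ) (L : Fin k → ℝ) : ℝ≥0∞ :=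
  ∑' c : {c : ConjClasses (FreeGroup (Fin k)) // c ≠ 1}, ENNReal.ofReal (f (hlen L c.1))

/-- `P_f(ℒ) = ∑_{w ∈ 𝒫_k} f(ℓ_ℒ(w))`, the sum over conjugacy classes of primitive elements. -/
noncomputable def Pf {k : ℕ} (f : ℝ → ℝ) (L : Fin k → ℝ) : ℝ≥0∞ :=
  ∑' c : {c : ConjClasses (FreeGroup (Fin k)) // ∃ g, IsPrimitive g ∧ ConjClasses.mk g = c},
    ENNReal.ofReal (f (hlen L c.1))

/-! ### Auxiliary combinatorics: counting reduced words -/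

variable {k : ℕ}

/-- The no-cancellation relation between adjacent letters of a reduced word. -/
def Good (p q : Fin k × Bool) : Prop := q ≠ (p.1, !p.2)

instance : DecidablePred fun l : List (Fin k × Bool) => l.Chain' Good := by
  intro l; unfold Good List.Chain'; infer_instance

lemma chain'_of_noPattern : ∀ l : List (Fin k × Bool),
    (∀ (L2 : List (Fin k × Bool)) (x : Fin k) (b : Bool) (L3 : List (Fin k × Bool)),
      l ≠ L2 ++ (x, b) :: (x, !b) :: L3) → l.Chain' Good
  | [], _ => List.isChain_nil
  | [a], _ => List.isChain_singleton a
  | a :: b :: t, h => by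
    rw [List.Chain', List.isChain_cons_cons]
    constructor
    · intro hb
      exact h [] a.1 a.2 t (by rw [hb]; rfl)
    · exact chain'_of_noPattern (b :: t) fun L2 x c L3 hl =>
        h (a :: L2) x c L3 (by rw [hl]; rfl)

lemma toWord_chain' (g : FreeGroup (Fin k)) : g.toWord.Chain' Good := by
  apply chain'_of_noPattern
  intro L2 x b L3 hl
  exact FreeGroup.reduce.not ((FreeGroup.reduce_toWord g).trans hl)

/-- The set of letters allowed to be prepended to the word `t`. -/
def allowed (t : List (Fin k × Bool)) : Finset (Fin k × Bool) :=
  match t with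
  | [] => Finset.univ
  | b :: _ => Finset.univ.erase (b.1, !b.2)

lemma mem_allowed_of_good {a b : Fin k × Bool} {t : List (Fin k × Bool)}
    (h : Good a b) : a ∈ allowed (b :: t) := by
  apply Finset.mem_erase.2 ⟨?_, Finset.mem_univ _⟩
  rintro rfl
  exact h (by simp)

lemma card_allowed_le (t : List (Fin k × Bool)) (ht : t ≠ []) :
    (allowed t).card ≤ 2 * k - 1 := by
  cases t with
  | nil => exact absurd rfl ht
  | cons b t =>
    have : (allowed (b :: t)).card = Fintype.card (Fin k × Bool) - 1 := by
      rw [allowed, Finset.card_erase_of_mem (Finset.mem_univ _), Finset.card_univ]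
    rw [this, Fintype.card_prod, Fintype.card_fin, Fintype.card_bool]
    omega

lemma card_allowed_le' (t : List (Fin k × Bool)) : (allowed t).card ≤ 2 * k := by
  have : (allowed t).card ≤ Fintype.card (Fin k × Bool) := Finset.card_le_univ _
  simpa [Fintype.card_prod, mul_comm] using this

/-- Finset of all reduced words of length `n`. -/
def RWords : ℕ → Finset (List (Fin k × Bool))
  | 0 => {[]}
  | n + 1 => (RWords n).biUnion fun t => (allowed t).image (· :: t)

lemma length_of_mem_RWords : ∀ n, ∀ l ∈ (RWords n : Finset (List (Fin k × Bool))), l.length = n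
  | 0, l, hl => by simp [RWords] at hl; simp [hl]
  | n + 1, l, hl => by
    rw [RWords, Finset.mem_biUnion] at hl
    obtain ⟨t, ht, hl⟩ := hl
    obtain ⟨a, _, rfl⟩ := Finset.mem_image.1 hl
    simp [length_of_mem_RWords n t ht]

lemma mem_RWords_of_chain' : ∀ (l : List (Fin k × Bool)), l.Chain' Good →
    l ∈ (RWords l.length : Finset (List (Fin k × Bool)))
  | [], _ => by simp [RWords]
  | a :: t, h => by
    have ht : t ∈ (RWords t.length : Finset (List (Fin k × Bool))) :=
      mem_RWords_of_chain' t h.tail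
    rw [List.length_cons, RWords, Finset.mem_biUnion]
    refine ⟨t, ht, Finset.mem_image.2 ⟨a, ?_, rfl⟩⟩
    cases t with
    | nil => simp [allowed]
    | cons b t' => exact mem_allowed_of_good ((List.isChain_cons_cons).1 h).1

lemma card_RWords_le (hk : 1 ≤ k) :
    ∀ n, (RWords n : Finset (List (Fin k × Bool))).card ≤ 2 * k * (2 * k - 1) ^ n
  | 0 => by simp [RWords]; omega
  | n + 1 => by
    have h1 : (RWords (n+1) : Finset (List (Fin k × Bool))).card ≤
        ∑ t ∈ (RWords n : Finset (List (Fin k × Bool))), (allowed t).card := by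
      rw [RWords]
      exact (Finset.card_biUnion_le).trans (Finset.sum_le_sum fun t _ => Finset.card_image_le)
    cases n with
    | zero =>
      refine h1.trans ?_
      have : ∀ t ∈ (RWords 0 : Finset (List (Fin k × Bool))), (allowed t).card ≤ 2 * k :=
        fun t _ => card_allowed_le' t
      calc ∑ t ∈ (RWords 0 : Finset (List (Fin k × Bool))), (allowed t).card
          ≤ ∑ _t ∈ (RWords 0 : Finset (List (Fin k × Bool))), 2 * k := Finset.sum_le_sum this
        _ = (RWords 0 : Finset (List (Fin k × Bool))).card * (2 * k) := by
            rw [Finset.sum_const, smul_eq_mul]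
        _ ≤ 2 * k * (2 * k - 1) ^ 1 := by
            have h2 : 1 ≤ 2 * k - 1 := by omega
            have h3 : (RWords 0 : Finset (List (Fin k × Bool))).card = 1 := by simp [RWords]
            rw [h3, one_mul, pow_one]
            calc 2*k = 2*k*1 := (mul_one _).symm
              _ ≤ 2*k*(2*k-1) := Nat.mul_le_mul_left _ h2
    | succ m =>
      refine h1.trans ?_
      have hb : ∀ t ∈ (RWords (m+1) : Finset (List (Fin k × Bool))),
          (allowed t).card ≤ 2 * k - 1 := by
        intro t ht
        apply card_allowed_le
        intro hnil
        have := length_of_mem_RWords (m+1) t ht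
        rw [hnil] at this; simp at this
      calc ∑ t ∈ (RWords (m+1) : Finset (List (Fin k × Bool))), (allowed t).card
          ≤ ∑ _t ∈ (RWords (m+1) : Finset (List (Fin k × Bool))), (2 * k - 1) :=
            Finset.sum_le_sum hb
        _ = (RWords (m+1) : Finset (List (Fin k × Bool))).card * (2 * k - 1) := by
            rw [Finset.sum_const, smul_eq_mul]
        _ ≤ (2 * k * (2 * k - 1) ^ (m+1)) * (2 * k - 1) :=
            Nat.mul_le_mul_right _ (card_RWords_le hk (m+1))
        _ = 2 * k * (2 * k - 1) ^ (m + 2) := by ring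

/-! ### Minimal representatives of conjugacy classes -/

lemma exists_minRep (c : ConjClasses (FreeGroup (Fin k))) :
    ∃ g, ConjClasses.mk g = c ∧
      ∀ h, ConjClasses.mk h = c → (FreeGroup.toWord g).length ≤ (FreeGroup.toWord h).length := by
  set S : Set ℕ :=
    (fun g : FreeGroup (Fin k) => (FreeGroup.toWord g).length) '' {g | ConjClasses.mk g = c}
    with hS
  have hne : S.Nonempty := by
    obtain ⟨g, hg⟩ := ConjClasses.exists_rep c
    exact ⟨_, g, hg, rfl⟩
  obtain ⟨g, hg, hgl⟩ := Nat.sInf_mem hne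
  refine ⟨g, hg, fun h hh => ?_⟩
  have hgl' : g.toWord.length = sInf S := hgl
  rw [hgl']
  exact Nat.sInf_le ⟨h, hh, rfl⟩

/-- A representative of a conjugacy class of minimal word length. -/
noncomputable def minRep (c : ConjClasses (FreeGroup (Fin k))) : FreeGroup (Fin k) :=
  (exists_minRep c).choose

lemma minRep_mk (c : ConjClasses (FreeGroup (Fin k))) : ConjClasses.mk (minRep c) = c :=
  (exists_minRep c).choose_spec.1

lemma minRep_min (c : ConjClasses (FreeGroup (Fin k))) {h : FreeGroup (Fin k)}
    (hh : ConjClasses.mk h = c) :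
    (FreeGroup.toWord (minRep c)).length ≤ (FreeGroup.toWord h).length :=
  (exists_minRep c).choose_spec.2 h hh

lemma minRep_ne_one {c : ConjClasses (FreeGroup (Fin k))} (hc : c ≠ 1) : minRep c ≠ 1 := by
  intro h
  apply hc
  rw [← minRep_mk c, h, ← ConjClasses.one_eq_mk_one]

lemma list_sum_ge (ε : ℝ) : ∀ l : List ℝ, (∀ x ∈ l, ε ≤ x) → ε * l.length ≤ l.sum
  | [], _ => by simp
  | x :: t, h => by
    have h1 := list_sum_ge ε t fun y hy => h y (List.mem_cons_of_mem _ hy)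
    have h2 := h x List.mem_cons_self
    simp only [List.sum_cons, List.length_cons]
    push_cast
    nlinarith [t.length.cast_nonneg (α := ℝ)]

lemma wlen_ge {L : Fin k → ℝ} {ε : ℝ} (hL : ∀ i, ε ≤ L i) (g : FreeGroup (Fin k)) :
    ε * (FreeGroup.toWord g).length ≤ wlen L g := by
  have := list_sum_ge ε ((FreeGroup.toWord g).map fun x => L x.1) (by
    intro x hx
    obtain ⟨y, _, rfl⟩ := List.mem_map.1 hx
    exact hL y.1)
  simpa [wlen] using this

lemma hlen_ge {L : Fin k → ℝ} {ε : ℝ} (hε : 0 ≤ ε) (hL : ∀ i, ε ≤ L i)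
    (c : ConjClasses (FreeGroup (Fin k))) :
    ε * (FreeGroup.toWord (minRep c)).length ≤ hlen L c := by
  apply le_csInf
  · exact ⟨wlen L (minRep c),
      Set.mem_image_of_mem _ (ConjClasses.mem_carrier_iff_mk_eq.2 (minRep_mk c))⟩
  · rintro y ⟨g, hg, rfl⟩
    have h1 : (FreeGroup.toWord (minRep c)).length ≤ (FreeGroup.toWord g).length :=
      minRep_min c (ConjClasses.mem_carrier_iff_mk_eq.1 hg)
    calc ε * (FreeGroup.toWord (minRep c)).length
        ≤ ε * (FreeGroup.toWord g).length := by
          apply mul_le_mul_of_nonneg_left _ hε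
          exact_mod_cast h1
      _ ≤ wlen L g := wlen_ge hL g

/-- Theorem A(a): if `f` is positive, non-increasing on `(0,∞)` and
`limsup_{x→∞} f(x)^{1/x} < 1/(2k-1)^k`, then there is a neighborhood `U` of `ℒ*`
in `Δ_k` on which `P_f ≤ C_f < ∞`. -/
theorem mcshane_stmt0 (k : ℕ) (hk : 2 ≤ k) (f : ℝ → ℝ)
    (hf_pos : ∀ x > (0:ℝ), 0 < f x)
    (hf_anti : AntitoneOn f (Set.Ioi 0))
    (hf_limsup : limsup (fun x : ℝ => f x ^ (1 / x)) atTop < 1 / (2 * (k:ℝ) - 1) ^ k) :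
    ∃ U ⊆ simplex k, U ∈ 𝓝[simplex k] (Lstar k) ∧
      ∀ L ∈ U, Pf f L ≤ Cf f L ∧ Cf f L < ⊤ := by
  have hk0 : (0:ℝ) < k := by positivity
  have h2k1 : (0:ℝ) < 2 * (k:ℝ) - 1 := by
    have : (2:ℝ) ≤ k := by exact_mod_cast hk
    linarith
  set B : ℝ := 1 / (2 * (k:ℝ) - 1) ^ k with hB_def
  have hB : 0 < B := by positivity
  -- boundedness of the limsup'd function
  have hbdd : IsBoundedUnder (· ≤ ·) atTop (fun x : ℝ => f x ^ (1 / x)) := by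
    apply isBoundedUnder_of_eventually_le (a := max 1 (f 1))
    filter_upwards [eventually_ge_atTop (1:ℝ)] with x hx1
    have hx0 : (0:ℝ) < x := lt_of_lt_of_le one_pos hx1
    have hfx : 0 < f x := hf_pos x hx0
    rcases le_or_gt (f x) 1 with h | h
    · exact le_max_of_le_left (Real.rpow_le_one hfx.le h (by positivity))
    · refine le_max_of_le_right ?_
      calc f x ^ (1/x) ≤ f x ^ (1:ℝ) :=
            Real.rpow_le_rpow_of_exponent_le h.le (by rw [div_le_one hx0]; exact hx1)
        _ = f x := Real.rpow_one _
        _ ≤ f 1 := hf_anti (Set.mem_Ioi.2 one_pos) (Set.mem_Ioi.2 hx0) hx1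
  obtain ⟨ρ₀, hρ₀1, hρ₀2⟩ := exists_between hf_limsup
  set ρ : ℝ := max ρ₀ (B/2) with hρ_def
  have hρpos : 0 < ρ := lt_of_lt_of_le (by linarith) (le_max_right _ _)
  have hρB : ρ < B := max_lt hρ₀2 (by linarith)
  have hρlimsup : limsup (fun x : ℝ => f x ^ (1 / x)) atTop < ρ :=
    lt_of_lt_of_le hρ₀1 (le_max_left _ _)
  -- eventual exponential bound on f
  have hev : ∀ᶠ x in atTop, f x ≤ ρ ^ x := by
    filter_upwards [eventually_lt_of_limsup_lt hρlimsup hbdd, eventually_ge_atTop (1:ℝ)]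
      with x hx hx1
    have hx0 : (0:ℝ) < x := lt_of_lt_of_le one_pos hx1
    have hfx : 0 < f x := hf_pos x hx0
    calc f x = f x ^ (1:ℝ) := (Real.rpow_one _).symm
      _ = f x ^ ((1/x) * x) := by rw [one_div_mul_cancel hx0.ne']
      _ = (f x ^ (1/x)) ^ x := Real.rpow_mul hfx.le _ _
      _ ≤ ρ ^ x := Real.rpow_le_rpow (Real.rpow_nonneg hfx.le _) hx.le hx0.le
  obtain ⟨X, hX⟩ := eventually_atTop.1 hev
  -- the key exponent inequality at 1/k
  set c : ℝ := 1 / (2 * (k:ℝ) - 1) with hc_def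
  have hc : 0 < c := by positivity
  have hkey : ρ ^ ((1:ℝ)/k) < c := by
    have h1 : ρ < c ^ k := by
      rw [hc_def, one_div, inv_pow, ← one_div]
      exact hρB
    calc ρ ^ ((1:ℝ)/k) < (c ^ k) ^ ((1:ℝ)/k) :=
          Real.rpow_lt_rpow hρpos.le h1 (by positivity)
      _ = c := by
          rw [← Real.rpow_natCast c k, ← Real.rpow_mul hc.le,
            mul_one_div_cancel (by positivity : (k:ℝ) ≠ 0), Real.rpow_one]
  -- choose ε < 1/k with ρ^ε < c
  have hcont : ContinuousAt (fun t : ℝ => ρ ^ t) (1/(k:ℝ)) :=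
    Real.continuousAt_const_rpow hρpos.ne'
  have h5 : ∀ᶠ t in 𝓝 (1/(k:ℝ)), ρ ^ t < c := hcont.eventually_lt continuousAt_const hkey
  have h6 : ∀ᶠ t in 𝓝[<] (1/(k:ℝ)), ρ ^ t < c := nhdsWithin_le_nhds h5
  have h7 : ∀ᶠ t in 𝓝[<] (1/(k:ℝ)), 0 < t :=
    nhdsWithin_le_nhds (eventually_gt_nhds (by positivity))
  have h8 : ∀ᶠ t in 𝓝[<] (1/(k:ℝ)), t < 1/(k:ℝ) := self_mem_nhdsWithin
  obtain ⟨ε, hε1, hε2, hε3⟩ := (h6.and (h7.and h8)).exists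
  -- the neighborhood U
  set V : Set (Fin k → ℝ) := {L | ∀ i, ε < L i} with hV_def
  have hV : V ∈ 𝓝 (Lstar k) := by
    rw [hV_def]
    rw [Filter.eventually_iff.symm] -- dummy
    apply eventually_all.2
    intro i
    have : Lstar k i = 1/(k:ℝ) := rfl
    exact (continuous_apply i).continuousAt (Ioi_mem_nhds (by rw [this] at *; exact hε3))
  refine ⟨simplex k ∩ V, Set.inter_subset_left, inter_mem_nhdsWithin _ hV, ?_⟩
  rintro L ⟨hLs, hLV⟩
  have hLε : ∀ i, ε ≤ L i := fun i => (hLV i).le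
  constructor
  · -- Pf ≤ Cf
    have hι : ∀ c : {c : ConjClasses (FreeGroup (Fin k)) //
        ∃ g, IsPrimitive g ∧ ConjClasses.mk g = c}, c.1 ≠ 1 := by
      rintro ⟨cc, g, ⟨e, i, hei⟩, hmk⟩ h1
      simp only at h1
      rw [h1, ConjClasses.one_eq_mk_one, ConjClasses.mk_eq_mk_iff_isConj] at hmk
      have hg1 : g = 1 := (isConj_one_right.1 (isConj_comm.1 hmk))
      rw [hg1] at hei
      exact FreeGroup.of_ne_one i (e.injective (by simpa using hei))
    have hinj : Function.Injective
        (fun c : {c : ConjClasses (FreeGroup (Fin k)) //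
          ∃ g, IsPrimitive g ∧ ConjClasses.mk g = c} =>
          (⟨c.1, hι c⟩ : {c : ConjClasses (FreeGroup (Fin k)) // c ≠ 1})) := by
      intro a b h
      exact Subtype.ext (Subtype.mk_eq_mk.1 h)
    exact ENNReal.tsum_comp_le_tsum_of_injective hinj
      (fun c => ENNReal.ofReal (f (hlen L c.1)))
  · -- Cf < ⊤
    -- per-class bound
    have hterm : ∀ c : {c : ConjClasses (FreeGroup (Fin k)) // c ≠ 1},
        ENNReal.ofReal (f (hlen L c.1)) ≤
          ENNReal.ofReal (f (ε * (FreeGroup.toWord (minRep c.1)).length)) := by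
      rintro ⟨cc, hcc⟩
      have hlen1 : 1 ≤ (FreeGroup.toWord (minRep cc)).length := by
        rcases Nat.eq_zero_or_pos (FreeGroup.toWord (minRep cc)).length with h | h
        · exact absurd (FreeGroup.toWord_eq_nil_iff.1 (List.length_eq_zero_iff.1 h))
            (minRep_ne_one hcc)
        · exact h
      have hpos : 0 < ε * (FreeGroup.toWord (minRep cc)).length := by
        have : (1:ℝ) ≤ (FreeGroup.toWord (minRep cc)).length := by exact_mod_cast hlen1
        nlinarith
      have hge : ε * (FreeGroup.toWord (minRep cc)).length ≤ hlen L cc :=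
        hlen_ge hε2.le hLε cc
      exact ENNReal.ofReal_le_ofReal
        (hf_anti (Set.mem_Ioi.2 hpos) (Set.mem_Ioi.2 (lt_of_lt_of_le hpos hge)) hge)
    -- inject classes into reduced words
    set RL := {l : List (Fin k × Bool) // l.Chain' Good} with hRL_def
    set H : RL → ℝ≥0∞ := fun l => ENNReal.ofReal (f (ε * l.1.length)) with hH_def
    have hΨinj : Function.Injective
        (fun c : {c : ConjClasses (FreeGroup (Fin k)) // c ≠ 1} =>
          (⟨FreeGroup.toWord (minRep c.1), toWord_chain' _⟩ : RL)) := by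
      intro a b h
      have h1 : FreeGroup.toWord (minRep a.1) = FreeGroup.toWord (minRep b.1) :=
        Subtype.mk_eq_mk.1 h
      have h2 : minRep a.1 = minRep b.1 := FreeGroup.toWord_injective h1
      have := (minRep_mk a.1).symm.trans ((congrArg ConjClasses.mk h2).trans (minRep_mk b.1))
      exact Subtype.ext this
    have step1 : Cf f L ≤ ∑' l : RL, H l := by
      calc Cf f L ≤ ∑' c : {c : ConjClasses (FreeGroup (Fin k)) // c ≠ 1},
            ENNReal.ofReal (f (ε * (FreeGroup.toWord (minRep c.1)).length)) :=
            ENNReal.tsum_le_tsum hterm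
        _ ≤ ∑' l : RL, H l := ENNReal.tsum_comp_le_tsum_of_injective hΨinj H
    -- group by length
    have step2 : ∑' l : RL, H l = ∑' n : ℕ, ∑' _l : {l : RL // l.1.length = n},
        ENNReal.ofReal (f (ε * n)) := by
      rw [← (Equiv.sigmaFiberEquiv (fun l : RL => l.1.length)).tsum_eq H]
      rw [ENNReal.tsum_sigma']
      congr 1
      funext n
      congr 1
      funext l
      simp only [Equiv.sigmaFiberEquiv, Equiv.coe_fn_mk, hH_def]
      rw [l.2]
    -- bound each fiber by the cardinality of reduced words
    have step3 : ∀ n : ℕ, ∑' _l : {l : RL // l.1.length = n}, ENNReal.ofReal (f (ε * n)) ≤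
        ((2 * k * (2 * k - 1) ^ n : ℕ) : ℝ≥0∞) * ENNReal.ofReal (f (ε * n)) := by
      intro n
      have hj : Function.Injective (fun l : {l : RL // l.1.length = n} =>
          (⟨l.1.1, by
            have := mem_RWords_of_chain' l.1.1 l.1.2
            rwa [l.2] at this⟩ :
            {w // w ∈ (RWords n : Finset (List (Fin k × Bool)))})) := by
        intro a b h
        exact Subtype.ext (Subtype.ext (Subtype.mk_eq_mk.1 h))
      calc ∑' _l : {l : RL // l.1.length = n}, ENNReal.ofReal (f (ε * n))
          ≤ ∑' _w : {w // w ∈ (RWords n : Finset (List (Fin k × Bool)))},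
              ENNReal.ofReal (f (ε * n)) :=
            ENNReal.tsum_comp_le_tsum_of_injective hj _
        _ = ∑ _w ∈ (RWords n : Finset (List (Fin k × Bool))), ENNReal.ofReal (f (ε * n)) :=
            Finset.tsum_subtype _ fun _ => ENNReal.ofReal (f (ε * n))
        _ = ((RWords n : Finset (List (Fin k × Bool))).card : ℝ≥0∞) *
              ENNReal.ofReal (f (ε * n)) := by
            rw [Finset.sum_const, nsmul_eq_mul]
        _ ≤ ((2 * k * (2 * k - 1) ^ n : ℕ) : ℝ≥0∞) * ENNReal.ofReal (f (ε * n)) := by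
            apply mul_le_mul_left
            exact_mod_cast card_RWords_le (by omega) n
    -- the geometric-series bound
    set q : ℝ := ρ ^ ε with hq_def
    have hq : 0 < q := Real.rpow_pos_of_pos hρpos _
    set r : ℝ≥0∞ := ((2 * k - 1 : ℕ) : ℝ≥0∞) * ENNReal.ofReal q with hr_def
    have hcast : ((2 * k - 1 : ℕ) : ℝ) = 2 * (k:ℝ) - 1 := by
      have : 1 ≤ 2 * k := by omega
      push_cast [this]
      ring
    have hr1 : r < 1 := by
      rw [hr_def, ← ENNReal.ofReal_natCast, ← ENNReal.ofReal_mul (by positivity)]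
      rw [ENNReal.ofReal_lt_one, hcast]
      calc (2 * (k:ℝ) - 1) * q < (2 * (k:ℝ) - 1) * c := by
            exact mul_lt_mul_of_pos_left hε1 h2k1
        _ = 1 := by rw [hc_def]; field_simp
    have hr0 : r ≠ 0 := by
      rw [hr_def]
      apply mul_ne_zero
      · simp only [ne_eq, Nat.cast_eq_zero]; omega
      · exact (ENNReal.ofReal_pos.2 hq).ne'
    have hrt : r ≠ ⊤ := (lt_of_lt_of_le hr1 le_top).ne  -- r < 1 ≤ ⊤
    set u : ℕ → ℝ≥0∞ := fun n =>
      ((2 * k * (2 * k - 1) ^ n : ℕ) : ℝ≥0∞) * ENNReal.ofReal (f (ε * n)) with hu_def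
    have hut : ∀ n, u n ≠ ⊤ := fun n =>
      (ENNReal.mul_lt_top (ENNReal.natCast_lt_top _) ENNReal.ofReal_lt_top).ne
    set N : ℕ := ⌈X / ε⌉₊ + 1 with hN_def
    have htail : ∀ n ≥ N, u n ≤ ((2 * k : ℕ) : ℝ≥0∞) * r ^ n := by
      intro n hn
      have hXn : X ≤ ε * n := by
        have h1 : X / ε ≤ (⌈X / ε⌉₊ : ℝ) := Nat.le_ceil _
        have h2 : ((N : ℕ) : ℝ) ≤ (n : ℝ) := by exact_mod_cast hn
        have h3 : (⌈X / ε⌉₊ : ℝ) ≤ (n : ℝ) := by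
          rw [hN_def] at h2; push_cast at h2 ⊢; linarith
        calc X = ε * (X / ε) := by field_simp
          _ ≤ ε * n := mul_le_mul_of_nonneg_left (h1.trans h3) hε2.le
      have hfn : f (ε * n) ≤ q ^ n := by
        calc f (ε * n) ≤ ρ ^ (ε * (n:ℝ)) := hX _ hXn
          _ = (ρ ^ ε) ^ ((n:ℝ) : ℝ) := by rw [← Real.rpow_mul hρpos.le]
          _ = q ^ n := by rw [hq_def, Real.rpow_natCast]
      calc u n = ((2 * k : ℕ) : ℝ≥0∞) * ((2 * k - 1 : ℕ) : ℝ≥0∞) ^ n *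
            ENNReal.ofReal (f (ε * n)) := by
            rw [hu_def]; push_cast; ring
        _ ≤ ((2 * k : ℕ) : ℝ≥0∞) * ((2 * k - 1 : ℕ) : ℝ≥0∞) ^ n *
            (ENNReal.ofReal q) ^ n := by
            apply mul_le_mul_right
            rw [← ENNReal.ofReal_pow hq.le]
            exact ENNReal.ofReal_le_ofReal hfn
        _ = ((2 * k : ℕ) : ℝ≥0∞) * r ^ n := by
            rw [hr_def, mul_pow]; ring
    set C : ℝ≥0∞ := ((Finset.range N).sup fun n => u n / r ^ n) ⊔ ((2 * k : ℕ) : ℝ≥0∞)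
      with hC_def
    have hCt : C < ⊤ := by
      rw [hC_def]
      apply max_lt _ (ENNReal.natCast_lt_top _)
      rw [Finset.sup_lt_iff (by simp : (⊥:ℝ≥0∞) < ⊤)]
      intro n _
      exact ENNReal.div_lt_top (hut n) (pow_ne_zero n hr0)
    have hall : ∀ n, u n ≤ C * r ^ n := by
      intro n
      rcases lt_or_ge n N with h | h
      · have h1 : u n = u n / r ^ n * r ^ n :=
          (ENNReal.div_mul_cancel (pow_ne_zero n hr0) (ENNReal.pow_ne_top hrt)).symm
        rw [h1]
        apply mul_le_mul_left
        have h2 : u n / r ^ n ≤ C := by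
          rw [hC_def]
          exact le_sup_of_le_left (Finset.le_sup (f := fun n => u n / r ^ n) (Finset.mem_range.2 h))
        exact h2
      · have h2 : ((2 * k : ℕ) : ℝ≥0∞) ≤ C := by rw [hC_def]; exact le_sup_right
        exact (htail n h).trans (mul_le_mul_left h2 _)
    have hsum : (∑' n : ℕ, u n) < ⊤ := by
      calc (∑' n : ℕ, u n) ≤ ∑' n : ℕ, C * r ^ n := ENNReal.tsum_le_tsum hall
        _ = C * (1 - r)⁻¹ := by rw [ENNReal.tsum_mul_left, ENNReal.tsum_geometric]
        _ < ⊤ := ENNReal.mul_lt_top hCt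
            (ENNReal.inv_lt_top.2 (tsub_pos_iff_lt.2 hr1))
    calc Cf f L ≤ ∑' l : RL, H l := step1
      _ = ∑' n : ℕ, ∑' _l : {l : RL // l.1.length = n}, ENNReal.ofReal (f (ε * n)) := step2
      _ ≤ ∑' n : ℕ, u n := ENNReal.tsum_le_tsum step3
      _ < ⊤ := hsum

end McShane
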